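/- For every k ∈ X with ‖k‖ ≤ 1 and every z ∈ X with ‖z‖ ≤ 1 and e*(z) ≤ 1 − ρ, it holds that φ⁻(x⁻_α + k − z) ≥ ρ/8 − |e*(k)|. -/
import Mathlib


open Filter Topology Set

set_option maxHeartbeats 1600000 in
theorem statement9 {X : Type*} [NormedAddCommGroup X] [NormedSpace ℝ X] [CompleteSpace X]
    (ρ t : ℝ) (hρ0 : 0 < ρ) (hρ1 : ρ < 1 / 4) (ht0 : 0 < t) (ht1 : t < ρ / 16)
    (v e h : X) (hv : ‖v‖ = 1) (he : ‖e‖ = 1) (hh : ‖h‖ = 1)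
    (vs es hs : X →L[ℝ] ℝ) (hvs : ‖vs‖ = 1) (hes : ‖es‖ = 1) (hhs : ‖hs‖ = 1)
    (hvv : vs v = 1) (hee : es e = 1) (hhh : hs h = 1) (heh : |es h| < ρ / 800)
    (xp xm yp ym : X)
    (hxp : xp = (1 - ρ / 2) • e + t • h) (hxm : xm = (1 - ρ / 2) • e - t • h)
    (hyp : yp = xp + (ρ / 4) • v) (hym : ym = xm - (ρ / 4) • v)
    (lam : ℝ) (hlam : lam = 1 - ρ / 100)
    (phip phim : X →L[ℝ] ℝ)
    (hphip : phip = lam • es + (1 - lam) • (hs - (4 * t / ρ) • vs))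
    (hphim : phim = lam • es + (1 - lam) • (-hs + (4 * t / ρ) • vs))
    (k : X) (hk : ‖k‖ ≤ 1) (z : X) (hz : ‖z‖ ≤ 1) (hez : es z ≤ 1 - ρ) :
    phim (xm + k - z) ≥ ρ / 8 - |es k| := by
  have bound : ∀ (f : X →L[ℝ] ℝ) (x : X), ‖f‖ = 1 → ‖x‖ ≤ 1 → |f x| ≤ 1 := by
    intro f x hf hx
    calc |f x| ≤ ‖f‖ * ‖x‖ := f.le_opNorm x
    _ ≤ 1 := by rw [hf]; linarith
  have hhe := bound hs e hhs he.le
  have hhk := bound hs k hhs hk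
  have hhz := bound hs z hhs hz
  have hve := bound vs e hvs he.le
  have hvh := bound vs h hvs hh.le
  have hvk := bound vs k hvs hk
  have hvz := bound vs z hvs hz
  have heh' : |es h| ≤ ρ / 800 := heh.le
  have key : phim (xm + k - z) =
      lam * ((1 - ρ / 2) - t * es h + es k - es z) +
      (1 - lam) * (-(((1 - ρ / 2) * hs e - t) + hs k - hs z) +
        (4 * t / ρ) * ((1 - ρ / 2) * vs e - t * vs h + vs k - vs z)) := by
    rw [hphim, hxm]
    simp only [ContinuousLinearMap.add_apply, ContinuousLinearMap.smul_apply,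
      ContinuousLinearMap.neg_apply, map_add, map_sub, map_smul, smul_eq_mul, hee, hhh]
    ring
  rw [key, hlam]
  rw [abs_le] at hhe hhk hhz hve hvh hvk hvz heh'
  have hp1 : -|es k| ≤ es k := neg_abs_le _
  have htvh1 : t * vs h ≤ t := by nlinarith [hvh.2]
  have htvh2 : -t ≤ t * vs h := by nlinarith [hvh.1]
  have hu0 : 0 ≤ 4 * t / ρ := by positivity
  have hu1 : 4 * t / ρ ≤ 1 / 4 := by
    rw [div_le_div_iff₀ hρ0 (by norm_num : (0:ℝ) < 4)]; linarith
  set u := 4 * t / ρ with hu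
  nlinarith [mul_nonneg ht0.le hρ0.le, mul_nonneg hρ0.le hρ0.le,
    mul_le_mul_of_nonneg_left hu1 hρ0.le,
    mul_nonneg hρ0.le hu0,
    mul_le_mul_of_nonneg_right heh'.2 ht0.le,
    mul_le_mul_of_nonneg_right heh'.1 ht0.le,
    mul_nonneg (mul_nonneg hρ0.le hu0) (by nlinarith : (0:ℝ) ≤ (1 - ρ/2) * vs e - t * vs h + vs k - vs z + 4),
    mul_nonneg hρ0.le (by linarith : (0:ℝ) ≤ es k + |es k|),
    abs_nonneg (es k)]
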